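/- Let λ and z₁ be real numbers with λ > 1, z₁ > 1 and z₁ ≠ λ. Then (1/2π) ∫_{−π}^{π} (λ² − 1)²/|e^{iθ} − λ|² dθ + (z₁² − 1)·((λ² − 1)/(z₁ − λ))² = (λ² − 1)·((z₁λ − 1)/(z₁ − λ))². -/

import Mathlib

open MeasureTheory

private lemma exp_I_deriv (θ : ℝ) : HasDerivAt (fun θ : ℝ => Complex.exp (Complex.I * θ))
    (Complex.I * Complex.exp (Complex.I * θ)) θ := by
  have h0 : HasDerivAt (fun z : ℂ => Complex.I * z) Complex.I (θ:ℂ) := by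
    simpa using (hasDerivAt_id (θ:ℂ)).const_mul Complex.I
  have h : HasDerivAt (fun z : ℂ => Complex.exp (Complex.I * z))
      (Complex.exp (Complex.I * θ) * Complex.I) θ :=
    (Complex.hasDerivAt_exp _).comp _ h0
  simpa [mul_comm] using h.comp_ofReal

private lemma exp_ne (lam : ℝ) (hlam : 1 < lam) (θ : ℝ) :
    Complex.exp (Complex.I * θ) - (lam : ℂ) ≠ 0 := by
  intro h
  have h1 : Complex.exp (Complex.I * θ) = (lam : ℂ) := by
    have := sub_eq_zero.mp h; exact this
  have h2 : ‖Complex.exp (Complex.I * θ)‖ = 1 := by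
    simpa [mul_comm] using Complex.norm_exp_ofReal_mul_I θ
  rw [h1] at h2
  simp only [Complex.norm_real, Real.norm_eq_abs] at h2
  rw [abs_of_pos (by linarith)] at h2
  linarith

private lemma G_deriv (lam : ℝ) (hlam : 1 < lam) (θ : ℝ) :
    HasDerivAt (fun θ : ℝ => θ - 2 * (Complex.log ((lam:ℂ) - Complex.exp (Complex.I * θ))).im)
      ((lam ^ 2 - 1) / ‖Complex.exp (Complex.I * θ) - (lam : ℂ)‖ ^ 2) θ := by
  set z := Complex.exp (Complex.I * θ) with hz
  have hw : HasDerivAt (fun θ : ℝ => (lam:ℂ) - Complex.exp (Complex.I * θ))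
      (-(Complex.I * z)) θ := (exp_I_deriv θ).const_sub _
  have hmem : (lam:ℂ) - z ∈ Complex.slitPlane := by
    left
    simp only [Complex.sub_re, Complex.ofReal_re]
    have : z.re ≤ 1 := by
      have h := Complex.abs_re_le_norm z
      have hz1 : ‖z‖ = 1 := by
        simpa [hz, mul_comm] using Complex.norm_exp_ofReal_mul_I θ
      rw [hz1] at h
      linarith [abs_le.mp h]
    linarith
  have hlog : HasDerivAt (fun θ : ℝ => Complex.log ((lam:ℂ) - Complex.exp (Complex.I * θ)))
      (((lam:ℂ) - z)⁻¹ * (-(Complex.I * z))) θ :=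
    by have h := (Complex.hasDerivAt_log hmem).comp θ hw; exact h
  have him : HasDerivAt (fun θ : ℝ => (Complex.log ((lam:ℂ) - Complex.exp (Complex.I * θ))).im)
      ((((lam:ℂ) - z)⁻¹ * (-(Complex.I * z))).im) θ :=
    (Complex.imCLM.hasFDerivAt.comp_hasDerivAt θ hlog)
  have hG : HasDerivAt (fun θ : ℝ => θ - 2 * (Complex.log ((lam:ℂ) - Complex.exp (Complex.I * θ))).im)
      (1 - 2 * (((lam:ℂ) - z)⁻¹ * (-(Complex.I * z))).im) θ := (hasDerivAt_id θ).sub (him.const_mul 2)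
  convert hG using 1
  -- pointwise identity
  have hzc : Complex.exp (Complex.I * θ)
      = Complex.ofReal (Real.cos θ) + Complex.ofReal (Real.sin θ) * Complex.I := by
    rw [mul_comm, Complex.exp_mul_I]
    simp [Complex.ofReal_cos, Complex.ofReal_sin]
  set c := Real.cos θ
  set s := Real.sin θ
  have hcs : c ^ 2 + s ^ 2 = 1 := by
    simpa [c, s, sq] using Real.cos_sq_add_sin_sq θ
  have hc : c ≤ 1 := Real.cos_le_one θ
  have hN : 0 < (lam - c) ^ 2 + s ^ 2 := by nlinarith
  have hdiv : (((lam:ℂ) - z)⁻¹ * (-(Complex.I * z)))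
      = (-(Complex.I * z)) / ((lam:ℂ) - z) := by
    rw [div_eq_mul_inv]; ring
  rw [hdiv, Complex.div_im, hz, hzc]
  have hnorm : ‖(Complex.ofReal c + Complex.ofReal s * Complex.I) - (lam:ℂ)‖ ^ 2
      = (lam - c) ^ 2 + s ^ 2 := by
    rw [Complex.sq_norm, Complex.normSq_apply]
    simp
    ring
  rw [hnorm]
  have hre : (-(Complex.I * ((c:ℂ) + (s:ℂ) * Complex.I))).re = s := by simp
  have him' : (-(Complex.I * ((c:ℂ) + (s:ℂ) * Complex.I))).im = -c := by simp
  have hure : ((lam:ℂ) - ((c:ℂ) + (s:ℂ) * Complex.I)).re = lam - c := by simp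
  have huim : ((lam:ℂ) - ((c:ℂ) + (s:ℂ) * Complex.I)).im = -s := by simp
  have hns : Complex.normSq ((lam:ℂ) - ((c:ℂ) + (s:ℂ) * Complex.I)) = (lam - c)^2 + s^2 := by
    rw [Complex.normSq_apply]; simp; ring
  rw [hre, him', hure, huim, hns]
  have hNne : (lam - c)^2 + s^2 ≠ 0 := ne_of_gt hN
  rw [div_sub_div_same, ← mul_div_assoc, eq_sub_iff_add_eq, ← add_div,
    div_eq_one_iff_eq hNne]
  linear_combination hcs

private lemma key_integral (lam : ℝ) (hlam : 1 < lam) :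
    ∫ θ in (-Real.pi)..Real.pi,
      (lam ^ 2 - 1) / ‖Complex.exp (Complex.I * θ) - (lam : ℂ)‖ ^ 2 = 2 * Real.pi := by
  have hcont : Continuous fun θ : ℝ =>
      (lam ^ 2 - 1) / ‖Complex.exp (Complex.I * θ) - (lam : ℂ)‖ ^ 2 := by
    apply continuous_const.div
    · fun_prop
    · intro θ
      exact pow_ne_zero _ (norm_ne_zero_iff.mpr (exp_ne lam hlam θ))
  have hint := intervalIntegral.integral_eq_sub_of_hasDerivAt
    (f := fun θ : ℝ => θ - 2 * (Complex.log ((lam:ℂ) - Complex.exp (Complex.I * θ))).im)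
    (a := -Real.pi) (b := Real.pi)
    (fun θ _ => G_deriv lam hlam θ) (hcont.intervalIntegrable _ _)
  rw [hint]
  have hpi : Complex.exp (Complex.I * (Real.pi : ℝ)) = -1 := by
    rw [mul_comm]; exact_mod_cast Complex.exp_pi_mul_I
  have hnpi : Complex.exp (Complex.I * ((-Real.pi : ℝ) : ℂ)) = -1 := by
    push_cast
    rw [mul_neg, mul_comm, Complex.exp_neg, Complex.exp_pi_mul_I]
    norm_num
  beta_reduce
  rw [hpi, hnpi]
  have hlog : (Complex.log ((lam:ℂ) - (-1))).im = 0 := by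
    have : ((lam:ℂ) - (-1)) = ((lam + 1 : ℝ) : ℂ) := by push_cast; ring
    rw [this, Complex.log_im, Complex.arg_ofReal_of_nonneg (by linarith)]
  rw [hlog]
  ring

/-- For real `λ > 1`, `z₁ > 1` with `z₁ ≠ λ`,
`(1/2π) ∫_{−π}^{π} (λ²−1)²/|e^{iθ}−λ|² dθ + (z₁²−1)·((λ²−1)/(z₁−λ))²
  = (λ²−1)·((z₁λ−1)/(z₁−λ))²`. -/
theorem stmt13 (lam z₁ : ℝ) (hlam : 1 < lam) (hz : 1 < z₁) (hne : z₁ ≠ lam) :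
    (1 / (2 * Real.pi)) *
        (∫ θ in (-Real.pi)..Real.pi,
          (lam ^ 2 - 1) ^ 2 / ‖Complex.exp (Complex.I * θ) - (lam : ℂ)‖ ^ 2)
      + (z₁ ^ 2 - 1) * ((lam ^ 2 - 1) / (z₁ - lam)) ^ 2
      = (lam ^ 2 - 1) * ((z₁ * lam - 1) / (z₁ - lam)) ^ 2 := by
  have hrw : (∫ θ in (-Real.pi)..Real.pi,
        (lam ^ 2 - 1) ^ 2 / ‖Complex.exp (Complex.I * θ) - (lam : ℂ)‖ ^ 2)
      = (lam ^ 2 - 1) * ∫ θ in (-Real.pi)..Real.pi,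
        (lam ^ 2 - 1) / ‖Complex.exp (Complex.I * θ) - (lam : ℂ)‖ ^ 2 := by
    rw [← intervalIntegral.integral_const_mul]
    apply intervalIntegral.integral_congr
    intro θ _
    simp only []
    rw [div_eq_mul_inv, div_eq_mul_inv]
    ring
  rw [hrw, key_integral lam hlam]
  have hzl : z₁ - lam ≠ 0 := sub_ne_zero.mpr hne
  have hpi : Real.pi ≠ 0 := Real.pi_ne_zero
  field_simp
  ring
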